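/- For the 4-leaf star tree map (p_1,p_2,p_3,p_4) ↦ (s_1,s_2,s_3,s_4) where s_i = p_i ∏_{j≠i}(1-p_j) + (1-p_i)∏_{j≠i} p_j, the determinant of the 4×4 Jacobian matrix [∂s_i/∂p_j] equals the product of the three factors (2p_1p_2 - p_1 - p_2 + 1 - p_3 - p_4 + 2p_3p_4) · (2p_1p_3 - p_1 - p_3 + 1 - p_2 - p_4 + 2p_2p_4) · (2p_1p_4 - p_1 - p_4 + 1 - p_2 - p_3 + 2p_2p_3). -/

import Mathlib

set_option maxHeartbeats 1600000

/-- The tree split probabilities of the 4-leaf star tree, as a function of the edge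
change probabilities: `s i p = p i ∏_{j≠i}(1-p j) + (1-p i) ∏_{j≠i} p j`. -/
def starSplit (i : Fin 4) (p : Fin 4 → ℝ) : ℝ :=
  p i * ∏ j ∈ Finset.univ.erase i, (1 - p j) +
    (1 - p i) * ∏ j ∈ Finset.univ.erase i, p j

lemma starSplit0 (p : Fin 4 → ℝ) : starSplit 0 p =
    p 0 * ((1-p 1)*((1-p 2)*(1-p 3))) + (1 - p 0) * (p 1 * (p 2 * p 3)) := by
  rw [starSplit, show (Finset.univ.erase (0:Fin 4)) = {1,2,3} from by decide]
  rw [Finset.prod_insert (by decide), Finset.prod_insert (by decide), Finset.prod_singleton,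
      Finset.prod_insert (by decide), Finset.prod_insert (by decide), Finset.prod_singleton]

lemma starSplit1 (p : Fin 4 → ℝ) : starSplit 1 p =
    p 1 * ((1-p 0)*((1-p 2)*(1-p 3))) + (1 - p 1) * (p 0 * (p 2 * p 3)) := by
  rw [starSplit, show (Finset.univ.erase (1:Fin 4)) = {0,2,3} from by decide]
  rw [Finset.prod_insert (by decide), Finset.prod_insert (by decide), Finset.prod_singleton,
      Finset.prod_insert (by decide), Finset.prod_insert (by decide), Finset.prod_singleton]

lemma starSplit2 (p : Fin 4 → ℝ) : starSplit 2 p =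
    p 2 * ((1-p 0)*((1-p 1)*(1-p 3))) + (1 - p 2) * (p 0 * (p 1 * p 3)) := by
  rw [starSplit, show (Finset.univ.erase (2:Fin 4)) = {0,1,3} from by decide]
  rw [Finset.prod_insert (by decide), Finset.prod_insert (by decide), Finset.prod_singleton,
      Finset.prod_insert (by decide), Finset.prod_insert (by decide), Finset.prod_singleton]

lemma starSplit3 (p : Fin 4 → ℝ) : starSplit 3 p =
    p 3 * ((1-p 0)*((1-p 1)*(1-p 2))) + (1 - p 3) * (p 0 * (p 1 * p 2)) := by
  rw [starSplit, show (Finset.univ.erase (3:Fin 4)) = {0,1,2} from by decide]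
  rw [Finset.prod_insert (by decide), Finset.prod_insert (by decide), Finset.prod_singleton,
      Finset.prod_insert (by decide), Finset.prod_insert (by decide), Finset.prod_singleton]

lemma starSplit_deriv_key (p : Fin 4 → ℝ) (i j : Fin 4) :
    deriv (fun t => starSplit i (Function.update p j t)) (p j)
      = starSplit i (Function.update p j 1) - starSplit i (Function.update p j 0) := by
  have h : (fun t => starSplit i (Function.update p j t))
      = fun t => (starSplit i (Function.update p j 1) - starSplit i (Function.update p j 0)) * t
          + starSplit i (Function.update p j 0) := by
    funext t
    fin_cases i <;> fin_cases j <;>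
      simp only [show ((⟨0, by omega⟩:Fin 4)) = 0 from rfl, show ((⟨1, by omega⟩:Fin 4)) = 1 from rfl,
        show ((⟨2, by omega⟩:Fin 4)) = 2 from rfl, show ((⟨3, by omega⟩:Fin 4)) = 3 from rfl,
        starSplit0, starSplit1, starSplit2, starSplit3, Function.update_apply] <;>
      simp <;> ring
  rw [h]
  simpa using (((hasDerivAt_id (p j)).const_mul
    (starSplit i (Function.update p j 1) - starSplit i (Function.update p j 0))).add_const
    (starSplit i (Function.update p j 0))).deriv

lemma det_fin_four' (M : Matrix (Fin 4) (Fin 4) ℝ) : M.det =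
    M 0 0 * (M 1 1 * (M 2 2 * M 3 3 - M 2 3 * M 3 2) - M 1 2 * (M 2 1 * M 3 3 - M 2 3 * M 3 1)
      + M 1 3 * (M 2 1 * M 3 2 - M 2 2 * M 3 1))
  - M 0 1 * (M 1 0 * (M 2 2 * M 3 3 - M 2 3 * M 3 2) - M 1 2 * (M 2 0 * M 3 3 - M 2 3 * M 3 0)
      + M 1 3 * (M 2 0 * M 3 2 - M 2 2 * M 3 0))
  + M 0 2 * (M 1 0 * (M 2 1 * M 3 3 - M 2 3 * M 3 1) - M 1 1 * (M 2 0 * M 3 3 - M 2 3 * M 3 0)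
      + M 1 3 * (M 2 0 * M 3 1 - M 2 1 * M 3 0))
  - M 0 3 * (M 1 0 * (M 2 1 * M 3 2 - M 2 2 * M 3 1) - M 1 1 * (M 2 0 * M 3 2 - M 2 2 * M 3 0)
      + M 1 2 * (M 2 0 * M 3 1 - M 2 1 * M 3 0)) := by
  rw [Matrix.det_succ_row_zero]
  simp [Fin.sum_univ_succ, Matrix.det_fin_three, Fin.succAbove,
    show (Fin.succ (2:Fin 3)) = (3:Fin 4) from rfl, show (Fin.castSucc (2:Fin 3)) = (2:Fin 4) from rfl]
  ring

/-- The determinant of the Jacobian matrix `[∂s_i/∂p_j]` of the map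
`(p₁,p₂,p₃,p₄) ↦ (s₁,s₂,s₃,s₄)` factors into three explicit quadratic factors. -/
theorem star_jacobian_det_factorization (p : Fin 4 → ℝ) :
    (Matrix.of fun i j : Fin 4 =>
        deriv (fun t => starSplit i (Function.update p j t)) (p j)).det =
      (2 * p 0 * p 1 - p 0 - p 1 + 1 - p 2 - p 3 + 2 * p 2 * p 3) *
        (2 * p 0 * p 2 - p 0 - p 2 + 1 - p 1 - p 3 + 2 * p 1 * p 3) *
        (2 * p 0 * p 3 - p 0 - p 3 + 1 - p 1 - p 2 + 2 * p 1 * p 2) := by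
  rw [det_fin_four']
  simp only [Matrix.of_apply, starSplit_deriv_key,
    starSplit0, starSplit1, starSplit2, starSplit3, Function.update_apply]
  simp
  ring
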